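/- arXiv:2110.12052 — 4 statements merged into one kernel-verified Lean document; each statement's English description precedes it below -/
import Mathlib

section
/- Modularity/autonomy of interventions: in the truncated factorization setting, for any vertex i ∉ W and any joint configuration 𝐯 in the support with 𝐯_W = 𝐰, the conditional distribution of V_i given its parents under p_{do(𝐰)} equals the kernel p_i: that is, p_{do(𝐰)}(V_i = x | Pa(i) = c) = p_i(x | c) whenever the conditioning event has positive probability. -/
open Finset

/-- Key marginalization lemma: summing the truncated factorization over all
configurations matching `u` on constrained coordinates `C` equals the sum over
configurations additionally pinned to `r` above `k`, with factors above `k`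
summed out. -/
lemma sum_out_aux
    {n : ℕ} {D : Fin n → Type} [∀ i, Fintype (D i)] [∀ i, DecidableEq (D i)]
    (pa : Fin n → Finset (Fin n))
    (htopo : ∀ i, ∀ j ∈ pa i, j < i)
    (p : (i : Fin n) → D i → ((j : Fin n) → D j) → ℝ)
    (hlocal : ∀ i x v w, (∀ j ∈ pa i, v j = w j) → p i x v = p i x w)
    (hnorm : ∀ i v, ∑ x : D i, p i x v = 1)
    (W : Finset (Fin n)) (w : (i : Fin n) → D i)
    (C : Fin n → Prop) [DecidablePred C] (u : (j : Fin n) → D j)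
    (r : (j : Fin n) → D j)
    (d : ℕ) : ∀ (k : ℕ), n ≤ k + d → (∀ j, C j → j.val < k) →
    ∑ v ∈ univ.filter (fun v : (j : Fin n) → D j => ∀ j, C j → v j = u j),
      ((∏ j ∈ Wᶜ, p j (v j) v) * (if ∀ j ∈ W, v j = w j then 1 else 0))
    = ∑ v ∈ univ.filter (fun v : (j : Fin n) → D j =>
        (∀ j, C j → v j = u j) ∧ ∀ j : Fin n, k ≤ j.val → v j = r j),
      ((∏ j ∈ Wᶜ.filter (fun j => j.val < k), p j (v j) v) *
        (if ∀ j ∈ W, j.val < k → v j = w j then 1 else 0)) := by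
  induction d with
  | zero =>
    intro k hk hC
    refine Finset.sum_congr ?_ ?_
    · apply Finset.filter_congr
      intro v _
      have hj : ∀ j : Fin n, ¬ (k ≤ j.val) := fun j => by have := j.isLt; omega
      exact ⟨fun h => ⟨h, fun j hjk => absurd hjk (hj j)⟩, fun h => h.1⟩
    · intro v _
      congr 1
      · apply Finset.prod_congr ?_ (fun _ _ => rfl)
        apply (Finset.filter_true_of_mem ?_).symm
        intro j _
        exact lt_of_lt_of_le j.isLt (by omega)
      · congr 1
        simp only [eq_iff_iff]
        constructor
        · intro h j hj _; exact h j hj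
        · intro h j hj; exact h j hj (lt_of_lt_of_le j.isLt (by omega))
  | succ d IH =>
    intro k hk hC
    by_cases hnk : n ≤ k + d
    · exact IH k hnk hC
    -- now k < n
    have hkn : k < n := by omega
    set km : Fin n := ⟨k, hkn⟩ with hkm
    have hkval : (km : ℕ) = k := rfl
    have hval_ne : ∀ j : Fin n, j ≠ km → (j:ℕ) ≠ k := by
      intro j hj he
      exact hj (Fin.ext (he.trans hkval.symm))
    rw [IH (k + 1) (by omega) (fun j hj => Nat.lt_succ_of_lt (hC j hj))]
    -- abbreviations
    set Sk : Finset ((j : Fin n) → D j) := univ.filter (fun v =>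
        (∀ j, C j → v j = u j) ∧ ∀ j : Fin n, k ≤ j.val → v j = r j) with hSk
    set Sk1 : Finset ((j : Fin n) → D j) := univ.filter (fun v =>
        (∀ j, C j → v j = u j) ∧ ∀ j : Fin n, k + 1 ≤ j.val → v j = r j) with hSk1
    have hfib := Finset.sum_fiberwise_eq_sum_filter Sk1 univ (fun v => v km)
      (fun v => (∏ j ∈ Wᶜ.filter (fun j => j.val < k + 1), p j (v j) v) *
        (if ∀ j ∈ W, j.val < k + 1 → v j = w j then 1 else 0))
    simp only [Finset.mem_univ, Finset.filter_true, filter_true_of_mem (fun _ _ => mem_univ _)]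
      at hfib
    rw [← hfib]
    -- for each y, the fiber sum equals a sum over Sk
    have hfibeq : ∀ y : D km,
        ∑ v ∈ Sk1.filter (fun v => v km = y),
          ((∏ j ∈ Wᶜ.filter (fun j => j.val < k + 1), p j (v j) v) *
            (if ∀ j ∈ W, j.val < k + 1 → v j = w j then 1 else 0))
        = ∑ v ∈ Sk,
          ((∏ j ∈ Wᶜ.filter (fun j => j.val < k + 1),
              p j (Function.update v km y j) (Function.update v km y)) *
            (if ∀ j ∈ W, j.val < k + 1 → Function.update v km y j = w j then 1 else 0)) := by
      intro y
      have hCkm : ¬ C km := fun h => by have := hC km h; omega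
      refine (Finset.sum_nbij' (fun v => Function.update v km y)
        (fun v => Function.update v km (r km)) ?_ ?_ ?_ ?_ ?_).symm
      · intro v hv
        simp only [hSk, mem_filter, mem_univ, true_and] at hv
        simp only [mem_filter, mem_univ, true_and, hSk1, Function.update_self]
        refine ⟨⟨?_, ?_⟩, trivial⟩
        · intro j hj
          have hne : j ≠ km := fun h => hCkm (h ▸ hj)
          rw [Function.update_of_ne hne]; exact hv.1 j hj
        · intro j hj
          have hne : j ≠ km := fun h => by rw [h, hkval] at hj; omega
          rw [Function.update_of_ne hne]; exact hv.2 j (by omega)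
      · intro v hv
        simp only [mem_filter, mem_univ, true_and, hSk1] at hv
        simp only [hSk, mem_filter, mem_univ, true_and]
        constructor
        · intro j hj
          have hne : j ≠ km := fun h => hCkm (h ▸ hj)
          rw [Function.update_of_ne hne]; exact hv.1.1 j hj
        · intro j hj
          by_cases hje : j = km
          · subst hje; simp
          · rw [Function.update_of_ne hje]
            exact hv.1.2 j (by have := hval_ne j hje; omega)
      · intro v hv
        simp only [hSk, mem_filter, mem_univ, true_and] at hv
        have hvk : v km = r km := hv.2 km (le_of_eq hkval)
        show Function.update (Function.update v km y) km (r km) = v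
        rw [Function.update_idem, ← hvk, Function.update_eq_self]
      · intro v hv
        simp only [mem_filter, mem_univ, true_and, hSk1] at hv
        show Function.update (Function.update v km (r km)) km y = v
        rw [Function.update_idem, ← hv.2, Function.update_eq_self]
      · intro v _; rfl
    simp only [hfibeq]
    rw [Finset.sum_comm]
    refine Finset.sum_congr rfl ?_
    intro v hv
    simp only [hSk, mem_filter, mem_univ, true_and] at hv
    have hupd : ∀ (y : D km) (j : Fin n), j ≠ km →
        Function.update v km y j = v j := fun y j h => Function.update_of_ne h y v
    have hfac : ∀ (y : D km), ∀ j ∈ Wᶜ.filter (fun j => j.val < k),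
        p j (Function.update v km y j) (Function.update v km y) = p j (v j) v := by
      intro y j hj
      simp only [mem_filter] at hj
      have hne : j ≠ km := fun h => by rw [h, hkval] at hj; omega
      rw [hupd y j hne]
      refine hlocal j (v j) _ v ?_
      intro j' hj'
      have hj'lt : j' < j := htopo j j' hj'
      have hne' : j' ≠ km := fun h => by
        have h2 : (j':ℕ) < (j:ℕ) := hj'lt
        rw [h, hkval] at h2; omega
      exact hupd y j' hne'
    by_cases hkW : km ∈ W
    · have hset : Wᶜ.filter (fun j => j.val < k + 1) = Wᶜ.filter (fun j => j.val < k) := by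
        ext j
        simp only [mem_filter, mem_compl, and_congr_right_iff]
        intro hjW
        constructor
        · intro h
          have h2 : j ≠ km := fun he => hjW (he ▸ hkW)
          have := hval_ne j h2
          omega
        · omega
      have hind : ∀ y : D km,
          (if ∀ j ∈ W, j.val < k + 1 → Function.update v km y j = w j then (1:ℝ) else 0)
          = (if ∀ j ∈ W, j.val < k → v j = w j then (1:ℝ) else 0)
            * (if y = w km then (1:ℝ) else 0) := by
        intro y
        rw [ite_zero_mul_ite_zero, one_mul]
        congr 1
        simp only [eq_iff_iff]
        constructor
        · intro h
          refine ⟨fun j hj hjk => ?_, ?_⟩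
          · have hne : j ≠ km := fun he => by rw [he, hkval] at hjk; omega
            rw [← hupd y j hne]; exact h j hj (by omega)
          · have := h km hkW (by rw [hkval]; omega)
            rwa [Function.update_self] at this
        · rintro ⟨h1, h2⟩ j hj hjk
          by_cases hje : j = km
          · subst hje; rw [Function.update_self]; exact h2
          · rw [hupd y j hje]
            exact h1 j hj (by have := hval_ne j hje; omega)
      calc ∑ y : D km,
            (∏ j ∈ Wᶜ.filter (fun j => j.val < k + 1),
              p j (Function.update v km y j) (Function.update v km y)) *
            (if ∀ j ∈ W, j.val < k + 1 → Function.update v km y j = w j then (1:ℝ) else 0)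
          = ∑ y : D km, (∏ j ∈ Wᶜ.filter (fun j => j.val < k), p j (v j) v) *
              ((if ∀ j ∈ W, j.val < k → v j = w j then (1:ℝ) else 0)
                * (if y = w km then (1:ℝ) else 0)) := by
            refine Finset.sum_congr rfl fun y _ => ?_
            rw [hset, Finset.prod_congr rfl (hfac y), hind y]
        _ = (∏ j ∈ Wᶜ.filter (fun j => j.val < k), p j (v j) v) *
              (if ∀ j ∈ W, j.val < k → v j = w j then (1:ℝ) else 0) := by
            rw [← Finset.mul_sum, ← Finset.mul_sum, Finset.sum_ite_eq' univ (w km)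
              (fun _ => (1:ℝ))]
            simp
    · have hkmWc : km ∈ Wᶜ.filter (fun j => j.val < k + 1) := by
        simp [mem_filter, mem_compl, hkW, km]
      have hset : Wᶜ.filter (fun j => j.val < k + 1)
          = insert km (Wᶜ.filter (fun j => j.val < k)) := by
        ext j
        simp only [mem_filter, mem_compl, mem_insert]
        constructor
        · rintro ⟨h1, h2⟩
          by_cases hje : j = km
          · exact Or.inl hje
          · exact Or.inr ⟨h1, by have := hval_ne j hje; omega⟩
        · rintro (h | ⟨h1, h2⟩)
          · subst h; exact ⟨hkW, by rw [hkval]; omega⟩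
          · exact ⟨h1, by omega⟩
      have hkmnot : km ∉ Wᶜ.filter (fun j => j.val < k) := by
        simp only [mem_filter, hkval, not_and]
        intro _; omega
      have hind : ∀ y : D km,
          (if ∀ j ∈ W, j.val < k + 1 → Function.update v km y j = w j then (1:ℝ) else 0)
          = (if ∀ j ∈ W, j.val < k → v j = w j then (1:ℝ) else 0) := by
        intro y
        congr 1
        simp only [eq_iff_iff]
        constructor
        · intro h j hj hjk
          have hne : j ≠ km := fun he => hkW (he ▸ hj)
          rw [← hupd y j hne]; exact h j hj (by omega)
        · intro h j hj hjk
          have hne : j ≠ km := fun he => hkW (he ▸ hj)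
          rw [hupd y j hne]
          exact h j hj (by have := hval_ne j hne; omega)
      have hkmfac : ∀ y : D km,
          p km (Function.update v km y km) (Function.update v km y) = p km y v := by
        intro y
        rw [Function.update_self]
        refine hlocal km y _ v ?_
        intro j' hj'
        have : j' < km := htopo km j' hj'
        have hne' : j' ≠ km := ne_of_lt this
        exact hupd y j' hne'
      calc ∑ y : D km,
            (∏ j ∈ Wᶜ.filter (fun j => j.val < k + 1),
              p j (Function.update v km y j) (Function.update v km y)) *
            (if ∀ j ∈ W, j.val < k + 1 → Function.update v km y j = w j then (1:ℝ) else 0)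
          = ∑ y : D km, p km y v * ((∏ j ∈ Wᶜ.filter (fun j => j.val < k), p j (v j) v) *
              (if ∀ j ∈ W, j.val < k → v j = w j then (1:ℝ) else 0)) := by
            refine Finset.sum_congr rfl fun y _ => ?_
            rw [hset, Finset.prod_insert hkmnot, hkmfac y,
              Finset.prod_congr rfl (hfac y), hind y, mul_assoc]
        _ = (∏ j ∈ Wᶜ.filter (fun j => j.val < k), p j (v j) v) *
              (if ∀ j ∈ W, j.val < k → v j = w j then (1:ℝ) else 0) := by
            rw [← Finset.sum_mul, hnorm km v, one_mul]

/-- Modularity/autonomy of interventions.  In the truncated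
factorization setting, for any non-intervened vertex `i ∉ W`, the conditional
distribution of `V i` given its parents under `p_{do(𝐰)}` equals the original
kernel `p i`: whenever the conditioning event `Pa(i) = c` has positive
interventional probability, `p_{do(𝐰)}(V i = x ∣ Pa(i) = c) = p i (x ∣ c)`. -/
theorem intervention_modularity
    (n : ℕ) (D : Fin n → Type) [∀ i, Fintype (D i)] [∀ i, Nonempty (D i)]
    [∀ i, DecidableEq (D i)]
    (pa : Fin n → Finset (Fin n))
    (htopo : ∀ i, ∀ j ∈ pa i, j < i)
    (p : (i : Fin n) → D i → ((j : Fin n) → D j) → ℝ)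
    (hnonneg : ∀ i x v, 0 ≤ p i x v)
    (hlocal : ∀ i x v w, (∀ j ∈ pa i, v j = w j) → p i x v = p i x w)
    (hnorm : ∀ i v, ∑ x : D i, p i x v = 1)
    (W : Finset (Fin n)) (w : (i : Fin n) → D i)
    -- the interventional (truncated-factorization) distribution
    (pdo : ((i : Fin n) → D i) → ℝ)
    (hpdo : ∀ v, pdo v =
      (∏ i ∈ Wᶜ, p i (v i) v) * (if ∀ i ∈ W, v i = w i then 1 else 0))
    (i : Fin n) (hiW : i ∉ W) (x : D i) (c : (j : Fin n) → D j)
    (hpos :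
      0 < ∑ v ∈ univ.filter (fun v : (j : Fin n) → D j => ∀ j ∈ pa i, v j = c j),
            pdo v) :
    (∑ v ∈ univ.filter
        (fun v : (j : Fin n) → D j => v i = x ∧ ∀ j ∈ pa i, v j = c j), pdo v) /
      (∑ v ∈ univ.filter
        (fun v : (j : Fin n) → D j => ∀ j ∈ pa i, v j = c j), pdo v)
      = p i x c := by
  classical
  set u₁ : (j : Fin n) → D j := Function.update c i x with hu₁
  have hpa_lt : ∀ j ∈ pa i, (j:ℕ) < (i:ℕ) := fun j hj => htopo i j hj
  have hpa_ne : ∀ j ∈ pa i, j ≠ i := fun j hj he => by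
    have := hpa_lt j hj; rw [he] at this; omega
  -- rewrite the denominator via the marginalization lemma
  have hD := sum_out_aux pa htopo p hlocal hnorm W w
      (fun j => j ∈ pa i) c u₁ n ((i:ℕ) + 1) (by have := i.isLt; omega)
      (fun j hj => by have := hpa_lt j hj; omega)
  have hN := sum_out_aux pa htopo p hlocal hnorm W w
      (fun j => j = i ∨ j ∈ pa i) u₁ u₁ n ((i:ℕ) + 1) (by have := i.isLt; omega)
      (fun j hj => by
        rcases hj with h | h
        · subst h; omega
        · have := hpa_lt j h; omega)
  -- the numerator's constraint set matches the C₁ form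
  have hNfilter : (univ.filter
      (fun v : (j : Fin n) → D j => v i = x ∧ ∀ j ∈ pa i, v j = c j))
      = univ.filter (fun v : (j : Fin n) → D j =>
          ∀ j, (j = i ∨ j ∈ pa i) → v j = u₁ j) := by
    apply Finset.filter_congr
    intro v _
    constructor
    · rintro ⟨h1, h2⟩ j hj
      rcases hj with h | h
      · subst h; rw [hu₁, Function.update_self]; exact h1
      · rw [hu₁, Function.update_of_ne (hpa_ne j h)]; exact h2 j h
    · intro h
      refine ⟨?_, ?_⟩
      · have := h i (Or.inl rfl); rwa [hu₁, Function.update_self] at this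
      · intro j hj
        have := h j (Or.inr hj)
        rwa [hu₁, Function.update_of_ne (hpa_ne j hj)] at this
  -- abbreviations
  set S₀ : Finset ((j : Fin n) → D j) := univ.filter (fun v =>
      (∀ j, j ∈ pa i → v j = c j) ∧ ∀ j : Fin n, (i:ℕ) + 1 ≤ (j:ℕ) → v j = u₁ j)
    with hS₀
  set F : ((j : Fin n) → D j) → ℝ := fun v =>
      (∏ j ∈ Wᶜ.filter (fun j : Fin n => (j:ℕ) < (i:ℕ) + 1), p j (v j) v) *
        (if ∀ j ∈ W, (j:ℕ) < (i:ℕ) + 1 → v j = w j then 1 else 0) with hF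
  set H : ((j : Fin n) → D j) → ℝ := fun v =>
      (∏ j ∈ (Wᶜ.filter (fun j : Fin n => (j:ℕ) < (i:ℕ) + 1)).erase i, p j (v j) v) *
        (if ∀ j ∈ W, (j:ℕ) < (i:ℕ) + 1 → v j = w j then 1 else 0) with hH
  have hiWc : i ∈ Wᶜ.filter (fun j : Fin n => (j:ℕ) < (i:ℕ) + 1) := by
    simp only [mem_filter, mem_compl]
    exact ⟨hiW, by omega⟩
  -- F splits as a kernel factor times H on S₀
  have hFH : ∀ v ∈ S₀, F v = p i (v i) c * H v := by
    intro v hv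
    simp only [hS₀, mem_filter, mem_univ, true_and] at hv
    have hpiv : p i (v i) v = p i (v i) c := hlocal i (v i) v c (fun j hj => hv.1 j hj)
    rw [hF, hH]
    simp only []
    rw [← Finset.mul_prod_erase _ _ hiWc, hpiv, mul_assoc]
  -- H is invariant under changing coordinate i, and S₀ membership too
  have hHupd : ∀ (v : (j : Fin n) → D j) (y : D i),
      H (Function.update v i y) = H v := by
    intro v y
    have hupd : ∀ (j : Fin n), j ≠ i → Function.update v i y j = v j :=
      fun j h => Function.update_of_ne h y v
    rw [hH]
    simp only []
    congr 1
    · refine Finset.prod_congr rfl ?_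
      intro j hj
      simp only [mem_erase, mem_filter, mem_compl] at hj
      rw [hupd j hj.1]
      refine hlocal j (v j) _ v ?_
      intro j' hj'
      have h1 : (j':ℕ) < (j:ℕ) := htopo j j' hj'
      have h2 : (j:ℕ) ≤ (i:ℕ) := by omega
      have : j' ≠ i := fun he => by rw [he] at h1; omega
      exact hupd j' this
    · congr 1
      simp only [eq_iff_iff]
      constructor
      · intro h j hj hjk
        have hne : j ≠ i := fun he => hiW (he ▸ hj)
        rw [← hupd j hne]; exact h j hj hjk
      · intro h j hj hjk
        have hne : j ≠ i := fun he => hiW (he ▸ hj)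
        rw [hupd j hne]; exact h j hj hjk
  -- fiber sums of H over S₀ are all equal
  have hfibH : ∀ y : D i,
      ∑ v ∈ S₀.filter (fun v => v i = y), H v
      = ∑ v ∈ S₀.filter (fun v => v i = x), H v := by
    intro y
    refine Finset.sum_nbij' (fun v => Function.update v i x)
      (fun v => Function.update v i y) ?_ ?_ ?_ ?_ ?_
    · intro v hv
      simp only [hS₀, mem_filter, mem_univ, true_and] at hv ⊢
      refine ⟨⟨?_, ?_⟩, Function.update_self i x v⟩
      · intro j hj
        rw [Function.update_of_ne (hpa_ne j hj)]; exact hv.1.1 j hj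
      · intro j hj
        have hne : j ≠ i := fun he => by rw [he] at hj; omega
        rw [Function.update_of_ne hne]; exact hv.1.2 j hj
    · intro v hv
      simp only [hS₀, mem_filter, mem_univ, true_and] at hv ⊢
      refine ⟨⟨?_, ?_⟩, Function.update_self i y v⟩
      · intro j hj
        rw [Function.update_of_ne (hpa_ne j hj)]; exact hv.1.1 j hj
      · intro j hj
        have hne : j ≠ i := fun he => by rw [he] at hj; omega
        rw [Function.update_of_ne hne]; exact hv.1.2 j hj
    · intro v hv
      simp only [hS₀, mem_filter, mem_univ, true_and] at hv
      show Function.update (Function.update v i x) i y = v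
      rw [Function.update_idem, ← hv.2, Function.update_eq_self]
    · intro v hv
      simp only [hS₀, mem_filter, mem_univ, true_and] at hv
      show Function.update (Function.update v i y) i x = v
      rw [Function.update_idem, ← hv.2, Function.update_eq_self]
    · intro v hv
      exact (hHupd v x).symm
  set T : ℝ := ∑ v ∈ S₀.filter (fun v => v i = x), H v with hT
  -- the denominator equals T
  have hDT : (∑ v ∈ univ.filter
      (fun v : (j : Fin n) → D j => ∀ j ∈ pa i, v j = c j), pdo v) = T := by
    calc (∑ v ∈ univ.filter
        (fun v : (j : Fin n) → D j => ∀ j ∈ pa i, v j = c j), pdo v)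
        = ∑ v ∈ univ.filter
            (fun v : (j : Fin n) → D j => ∀ j ∈ pa i, v j = c j),
            ((∏ j ∈ Wᶜ, p j (v j) v) * (if ∀ j ∈ W, v j = w j then 1 else 0)) :=
          Finset.sum_congr rfl (fun v _ => hpdo v)
      _ = ∑ v ∈ S₀, F v := hD
      _ = ∑ y : D i, ∑ v ∈ S₀.filter (fun v => v i = y), F v := by
          have := Finset.sum_fiberwise_eq_sum_filter S₀ univ (fun v => v i) F
          simp only [Finset.mem_univ, Finset.filter_true,
            filter_true_of_mem (fun _ _ => mem_univ _)] at this
          exact this.symm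
      _ = ∑ y : D i, p i y c * T := by
          refine Finset.sum_congr rfl fun y _ => ?_
          rw [← hfibH y, Finset.mul_sum]
          refine Finset.sum_congr rfl fun v hv => ?_
          simp only [mem_filter] at hv
          rw [hFH v hv.1, hv.2]
      _ = (∑ y : D i, p i y c) * T := by rw [Finset.sum_mul]
      _ = T := by rw [hnorm i c, one_mul]
  -- the numerator equals p i x c * T
  have hNT : (∑ v ∈ univ.filter
      (fun v : (j : Fin n) → D j => v i = x ∧ ∀ j ∈ pa i, v j = c j), pdo v)
      = p i x c * T := by
    have hS₁ : univ.filter (fun v : (j : Fin n) → D j =>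
        (∀ j, (j = i ∨ j ∈ pa i) → v j = u₁ j) ∧
          ∀ j : Fin n, (i:ℕ) + 1 ≤ (j:ℕ) → v j = u₁ j)
        = S₀.filter (fun v => v i = x) := by
      rw [hS₀, Finset.filter_filter]
      apply Finset.filter_congr
      intro v _
      constructor
      · rintro ⟨h1, h2⟩
        refine ⟨⟨?_, h2⟩, ?_⟩
        · intro j hj
          have := h1 j (Or.inr hj)
          rwa [hu₁, Function.update_of_ne (hpa_ne j hj)] at this
        · have := h1 i (Or.inl rfl)
          rwa [hu₁, Function.update_self] at this
      · rintro ⟨⟨h1, h2⟩, h3⟩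
        refine ⟨?_, h2⟩
        intro j hj
        rcases hj with h | h
        · subst h; rw [hu₁, Function.update_self]; exact h3
        · rw [hu₁, Function.update_of_ne (hpa_ne j h)]; exact h1 j h
    calc (∑ v ∈ univ.filter
        (fun v : (j : Fin n) → D j => v i = x ∧ ∀ j ∈ pa i, v j = c j), pdo v)
        = ∑ v ∈ univ.filter
            (fun v : (j : Fin n) → D j => v i = x ∧ ∀ j ∈ pa i, v j = c j),
            ((∏ j ∈ Wᶜ, p j (v j) v) * (if ∀ j ∈ W, v j = w j then 1 else 0)) :=
          Finset.sum_congr rfl (fun v _ => hpdo v)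
      _ = ∑ v ∈ S₀.filter (fun v => v i = x), F v := by rw [hNfilter, hN, hS₁]
      _ = ∑ v ∈ S₀.filter (fun v => v i = x), p i x c * H v := by
          refine Finset.sum_congr rfl fun v hv => ?_
          simp only [mem_filter] at hv
          rw [hFH v hv.1, hv.2]
      _ = p i x c * T := by rw [hT, Finset.mul_sum]
  have hTpos : 0 < T := hDT ▸ hpos
  rw [hNT, hDT, mul_div_assoc, div_self (ne_of_gt hTpos), mul_one]
end

section
/- An SPN with sum nodes whose weights at each sum node are nonnegative and sum to one, and whose leaves are normalized distributions, computes a value S(x) ≥ 0 for every input; moreover, under completeness and decomposability the root computes a normalized probability mass function: ∑_x S(x) = 1. -/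
open Finset

/-- A sum-product network over variables `Fin n` with finite domains `D i`:
a leaf carries a distribution over a single variable, a product node combines
two sub-circuits, and a sum node takes a weighted combination of two
sub-circuits. -/
inductive SPN (n : ℕ) (D : Fin n → Type) where
  | leaf (i : Fin n) (f : D i → ℝ)
  | prod (l r : SPN n D)
  | sum (w₁ w₂ : ℝ) (l r : SPN n D)

namespace SPN

variable {n : ℕ} {D : Fin n → Type}

/-- The scope of a node (equation (2) of the paper). -/
def scope : SPN n D → Finset (Fin n)
  | leaf i _ => {i}
  | prod l r => scope l ∪ scope r
  | sum _ _ l r => scope l ∪ scope r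

/-- Bottom-up evaluation of the circuit on a joint assignment. -/
def eval : SPN n D → ((i : Fin n) → D i) → ℝ
  | leaf i f, x => f (x i)
  | prod l r, x => eval l x * eval r x
  | sum w₁ w₂ l r, x => w₁ * eval l x + w₂ * eval r x

/-- Validity: leaves are normalized distributions, product nodes are
decomposable (disjoint child scopes), and sum nodes are complete (equal child
scopes) with nonnegative weights summing to one. -/
def valid [∀ i, Fintype (D i)] : SPN n D → Prop
  | leaf _ f => (∀ x, 0 ≤ f x) ∧ ∑ x, f x = 1
  | prod l r => valid l ∧ valid r ∧ Disjoint (scope l) (scope r)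
  | sum w₁ w₂ l r => valid l ∧ valid r ∧ 0 ≤ w₁ ∧ 0 ≤ w₂ ∧ w₁ + w₂ = 1 ∧
      scope l = scope r

end SPN

namespace SPNAux

open SPN

variable {n : ℕ} {D : Fin n → Type}

variable {n : ℕ} {D : Fin n → Type}

lemma eval_congr (S : SPN n D) (x y : (i : Fin n) → D i)
    (h : ∀ i ∈ S.scope, x i = y i) : S.eval x = S.eval y := by
  induction S with
  | leaf i f => exact congrArg f (h i (by simp [SPN.scope]))
  | prod l r ihl ihr =>
      simp only [SPN.eval]
      rw [ihl fun i hi => h i (by simp [SPN.scope, hi]),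
          ihr fun i hi => h i (by simp [SPN.scope, hi])]
  | sum w₁ w₂ l r ihl ihr =>
      simp only [SPN.eval]
      rw [ihl fun i hi => h i (by simp [SPN.scope, hi]),
          ihr fun i hi => h i (by simp [SPN.scope, hi])]

lemma eval_nonneg [∀ i, Fintype (D i)] (S : SPN n D) (hS : S.valid)
    (x : (i : Fin n) → D i) : 0 ≤ S.eval x := by
  induction S with
  | leaf i f => exact hS.1 (x i)
  | prod l r ihl ihr => exact mul_nonneg (ihl hS.1) (ihr hS.2.1)
  | sum w₁ w₂ l r ihl ihr =>
      obtain ⟨hl, hr, h1, h2, _, _⟩ := hS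
      exact add_nonneg (mul_nonneg h1 (ihl hl)) (mul_nonneg h2 (ihr hr))

lemma valid_nonempty [∀ i, Fintype (D i)] (S : SPN n D) (hS : S.valid) :
    ∀ i ∈ S.scope, Nonempty (D i) := by
  induction S with
  | leaf i f =>
      intro j hj
      simp only [SPN.scope, Finset.mem_singleton] at hj
      subst hj
      by_contra hempty
      rw [not_nonempty_iff] at hempty
      have := hS.2
      rw [Finset.univ_eq_empty, Finset.sum_empty] at this
      norm_num at this
  | prod l r ihl ihr =>
      intro j hj
      rcases Finset.mem_union.mp hj with h | h
      · exact ihl hS.1 j h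
      · exact ihr hS.2.1 j h
  | sum w₁ w₂ l r ihl ihr =>
      intro j hj
      rcases Finset.mem_union.mp hj with h | h
      · exact ihl hS.1 j h
      · exact ihr hS.2.1 j h

lemma sum_mul_split [∀ i, Fintype (D i)] (d : (i : Fin n) → D i)
    (p : Fin n → Prop) [DecidablePred p]
    (F G : ((i : Fin n) → D i) → ℝ)
    (hF : ∀ x y, (∀ i, p i → x i = y i) → F x = F y)
    (hG : ∀ x y, (∀ i, ¬ p i → x i = y i) → G x = G y) :
    ∑ x : (i : Fin n) → D i, F x * G x =
      (∑ a : (i : {i // p i}) → D i,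
          F (fun i => if h : p i then a ⟨i, h⟩ else d i)) *
      (∑ b : (i : {i // ¬ p i}) → D i,
          G (fun i => if h : p i then d i else b ⟨i, h⟩)) := by
  rw [← (Equiv.piEquivPiSubtypeProd p D).symm.sum_comp (fun x => F x * G x),
      Fintype.sum_prod_type, Finset.sum_mul_sum]
  refine Finset.sum_congr rfl fun a _ => Finset.sum_congr rfl fun b _ => ?_
  congr 1
  · refine hF _ _ fun i hi => ?_
    simp [Equiv.piEquivPiSubtypeProd_symm_apply, hi]
  · refine hG _ _ fun i hi => ?_
    simp [Equiv.piEquivPiSubtypeProd_symm_apply, hi]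

/-- Sum of the constant 1 over a pi-type indexed by a subtype. -/
lemma sum_one_subtype [∀ i, Fintype (D i)] (q : Fin n → Prop) [DecidablePred q]
    (s : Finset (Fin n)) (hs : ∀ j, j ∈ s ↔ q j) :
    (∑ _x : (i : {i // q i}) → D i, (1 : ℝ)) =
      ∏ i ∈ s, (Fintype.card (D i) : ℝ) := by
  rw [Finset.sum_const, Finset.card_univ, Fintype.card_pi, nsmul_eq_mul, mul_one]
  push_cast
  exact (Finset.prod_subtype s hs (fun i => (Fintype.card (D i) : ℝ))).symm

/-- Sum over a pi-type indexed by a subtype carved out by a predicate that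
holds only at `i`. -/
lemma sum_single_subtype [∀ i, Fintype (D i)] (p : Fin n → Prop) [DecidablePred p]
    (i : Fin n) (hip : p i) (huni : ∀ j, p j → j = i)
    (g : D i → ℝ) (y : (j : Fin n) → D j) :
    (∑ a : (i' : {i' // p i'}) → D i',
        g (if h : p i then a ⟨i, h⟩ else y i)) = ∑ v : D i, g v := by
  letI : Unique {j : Fin n // p j} :=
    ⟨⟨⟨i, hip⟩⟩, fun ⟨j, hj⟩ => Subtype.ext (huni j hj)⟩
  refine Fintype.sum_equiv (Equiv.piUnique (fun j : {j // p j} => D j))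
    (fun a => g (if h : p i then a ⟨i, h⟩ else y i))
    (fun v : D i => g v) fun a => ?_
  simp only [Equiv.piUnique_apply, dif_pos hip]
  rfl

lemma sum_eval [∀ i, Fintype (D i)] (hne : ∀ i, Nonempty (D i))
    (S : SPN n D) (hS : S.valid) :
    ∑ x : (i : Fin n) → D i, S.eval x =
      ∏ i ∈ S.scopeᶜ, (Fintype.card (D i) : ℝ) := by
  have d : (i : Fin n) → D i := fun i => Classical.choice (hne i)
  have hpos : ∀ s : Finset (Fin n),
      (0 : ℝ) < ∏ i ∈ s, (Fintype.card (D i) : ℝ) := by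
    intro s
    refine Finset.prod_pos fun i _ => ?_
    have : 0 < Fintype.card (D i) := @Fintype.card_pos _ _ (hne i)
    exact_mod_cast this
  induction S with
  | leaf i f =>
      simp only [SPN.eval, SPN.scope]
      set p : Fin n → Prop := fun j => j ∈ ({i} : Finset (Fin n)) with hp
      have hip : p i := by simp [hp]
      have key := sum_mul_split d p (fun x => f (x i)) (fun _ => (1 : ℝ))
        (fun x y h => congrArg f (h i hip)) (fun x y h => rfl)
      simp only [mul_one] at key
      rw [key]
      have h1 := sum_single_subtype p i hip (fun j hj => by simpa [hp] using hj) f d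
      have h2 := sum_one_subtype (D := D) (fun j => ¬ p j) ({i} : Finset (Fin n))ᶜ
        (fun j => by simp [hp])
      rw [h1, h2, hS.2, one_mul]
  | prod l r ihl ihr =>
      obtain ⟨hl, hr, hdisj⟩ := hS
      simp only [SPN.eval, SPN.scope]
      set p : Fin n → Prop := fun j => j ∈ SPN.scope l with hp
      have hF : ∀ x y, (∀ i, p i → x i = y i) → SPN.eval l x = SPN.eval l y :=
        fun x y h => eval_congr l x y fun i hi => h i hi
      have hG : ∀ x y, (∀ i, ¬ p i → x i = y i) → SPN.eval r x = SPN.eval r y :=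
        fun x y h => eval_congr r x y fun i hi =>
          h i fun hpi => Finset.disjoint_left.mp hdisj hpi hi
      have key3 := sum_mul_split d p (SPN.eval l) (SPN.eval r) hF hG
      have key1 := sum_mul_split d p (SPN.eval l) (fun _ => (1 : ℝ)) hF
        (fun x y h => rfl)
      have key2 := sum_mul_split d p (fun _ => (1 : ℝ)) (SPN.eval r)
        (fun x y h => rfl) hG
      simp only [mul_one] at key1
      simp only [one_mul] at key2
      rw [ihl hl] at key1
      rw [ihr hr] at key2
      have h2 := sum_one_subtype (D := D) (fun j => ¬ p j) (SPN.scope l)ᶜ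
        (fun j => by simp [hp])
      have h2' := sum_one_subtype (D := D) p (SPN.scope l) (fun j => by simp [hp])
      rw [h2] at key1
      rw [h2'] at key2
      rw [key3]
      have hL := mul_right_cancel₀ (ne_of_gt (hpos (SPN.scope l)ᶜ))
        (key1.symm.trans (one_mul _).symm)
      rw [hL, one_mul]
      have hsplit : (∏ i ∈ (SPN.scope r)ᶜ, (Fintype.card (D i) : ℝ)) =
          (∏ i ∈ SPN.scope l, (Fintype.card (D i) : ℝ)) *
          ∏ i ∈ (SPN.scope l ∪ SPN.scope r)ᶜ, (Fintype.card (D i) : ℝ) := by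
        rw [← Finset.prod_union
          (Disjoint.mono_left Finset.subset_union_left disjoint_compl_right)]
        apply Finset.prod_congr _ (fun _ _ => rfl)
        ext j
        simp only [Finset.mem_compl, Finset.mem_union, not_or]
        constructor
        · intro hj
          by_cases hjl : j ∈ SPN.scope l
          · exact Or.inl hjl
          · exact Or.inr ⟨hjl, hj⟩
        · rintro (hjl | ⟨_, hjr⟩)
          · exact Finset.disjoint_left.mp hdisj hjl
          · exact hjr
      exact (mul_left_cancel₀ (ne_of_gt (hpos (SPN.scope l)))
        (key2.symm.trans hsplit)).symm ▸ rfl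
  | sum w₁ w₂ l r ihl ihr =>
      obtain ⟨hl, hr, _, _, hw, hsc⟩ := hS
      simp only [SPN.eval, SPN.scope]
      rw [Finset.sum_add_distrib, ← Finset.mul_sum, ← Finset.mul_sum, ihl hl, ihr hr,
          hsc, Finset.union_self, ← add_mul, hw, one_mul]

end SPNAux

/-- A complete, decomposable SPN with normalized weights and
normalized leaves computes a nonnegative value on every input, and if its
scope covers all variables then it computes a normalized probability mass
function: `∑ x, S(x) = 1`. -/
theorem spn_nonneg_and_normalized
    (n : ℕ) (D : Fin n → Type) [∀ i, Fintype (D i)]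
    (S : SPN n D) (hS : S.valid) :
    (∀ x : (i : Fin n) → D i, 0 ≤ S.eval x) ∧
    (S.scope = Finset.univ → ∑ x : (i : Fin n) → D i, S.eval x = 1) := by
  refine ⟨fun x => SPNAux.eval_nonneg S hS x, fun hsc => ?_⟩
  have hne : ∀ i, Nonempty (D i) := fun i =>
    SPNAux.valid_nonempty S hS i (hsc ▸ Finset.mem_univ i)
  rw [SPNAux.sum_eval hne S hS, hsc, Finset.compl_univ, Finset.prod_empty]
end

section
/- Marginal inference in a decomposable and complete SPN with normalized weights is exact and linear time: replacing every leaf over a marginalized variable by the constant 1 (i.e., summing its distribution to 1) yields a circuit whose root value equals the marginal ∑_{x_M} S(x_E, x_M) over the marginalized variables M, for any assignment x_E to the remaining variables E. -/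
open Finset

namespace SPN

variable {n : ℕ} {D : Fin n → Type}

/-- Leaf-marginalization: every leaf over a variable in `M` is replaced by the
constant function `1` (its distribution summed out). -/
def marg (M : Finset (Fin n)) : SPN n D → SPN n D
  | leaf i f => if i ∈ M then leaf i (fun _ => 1) else leaf i f
  | prod l r => prod (marg M l) (marg M r)
  | sum w₁ w₂ l r => sum w₁ w₂ (marg M l) (marg M r)

theorem eval_congr (S : SPN n D) {x x' : (i : Fin n) → D i}
    (h : ∀ i ∈ S.scope, x i = x' i) : S.eval x = S.eval x' := by
  induction S with
  | leaf i f => simp [eval, h i (by simp [scope])]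
  | prod l r ihl ihr =>
      simp only [eval]
      rw [ihl (fun i hi => h i (by simp [scope, hi])),
        ihr (fun i hi => h i (by simp [scope, hi]))]
  | sum w₁ w₂ l r ihl ihr =>
      simp only [eval]
      rw [ihl (fun i hi => h i (by simp [scope, hi])),
        ihr (fun i hi => h i (by simp [scope, hi]))]

/-- Splitting a pi-type over a disjoint union. -/
def piSplit (A B : Finset (Fin n)) (hd : Disjoint A B) :
    ((i : {i // i ∈ A ∪ B}) → D i) ≃
      ((i : {i // i ∈ A}) → D i) × ((i : {i // i ∈ B}) → D i) where
  toFun y := (fun i => y ⟨i.1, mem_union_left _ i.2⟩,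
              fun i => y ⟨i.1, mem_union_right _ i.2⟩)
  invFun p := fun i =>
    if h : i.1 ∈ A then p.1 ⟨i.1, h⟩
    else p.2 ⟨i.1, (mem_union.mp i.2).resolve_left h⟩
  left_inv y := by
    funext i
    by_cases h : i.1 ∈ A
    · simp only [dif_pos h]
    · simp only [dif_neg h]
  right_inv p := by
    ext i
    · simp only [dif_pos i.2]
    · have : i.1 ∉ A := fun h => (Finset.disjoint_left.mp hd h) i.2
      simp only [dif_neg this]

/-- Pi-type over a singleton finset. -/
def piSingleton (i : Fin n) :
    ((j : {j // j ∈ ({i} : Finset (Fin n))}) → D j.1) ≃ D i where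
  toFun y := y ⟨i, Finset.mem_singleton_self i⟩
  invFun d j := by
    have h : (⟨i, Finset.mem_singleton_self i⟩ :
        {j // j ∈ ({i} : Finset (Fin n))}) = j :=
      Subtype.ext ((Finset.mem_singleton.mp j.2).symm)
    exact h ▸ d
  left_inv y := by
    funext j
    have h : (⟨i, Finset.mem_singleton_self i⟩ :
        {j // j ∈ ({i} : Finset (Fin n))}) = j :=
      Subtype.ext ((Finset.mem_singleton.mp j.2).symm)
    subst h
    rfl
  right_inv d := rfl

theorem sum_pi_union (A B : Finset (Fin n)) (hd : Disjoint A B)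
    [∀ i, Fintype (D i)]
    (g : ((i : {i // i ∈ A}) → D i) → ℝ) (h : ((i : {i // i ∈ B}) → D i) → ℝ) :
    (∑ y : (i : {i // i ∈ A ∪ B}) → D i,
        g (fun i => y ⟨i.1, mem_union_left _ i.2⟩) *
        h (fun i => y ⟨i.1, mem_union_right _ i.2⟩)) =
      (∑ a, g a) * (∑ b, h b) := by
  rw [show (∑ y : (i : {i // i ∈ A ∪ B}) → D i,
        g (fun i => y ⟨i.1, mem_union_left _ i.2⟩) *
        h (fun i => y ⟨i.1, mem_union_right _ i.2⟩)) =
      ∑ p : ((i : {i // i ∈ A}) → D i) × ((i : {i // i ∈ B}) → D i),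
        g p.1 * h p.2 from
    Fintype.sum_equiv (piSplit A B hd) _ _ (fun y => rfl)]
  rw [Fintype.sum_prod_type, ← Finset.sum_mul_sum]

theorem marg_eval [∀ i, Fintype (D i)] (M : Finset (Fin n)) (S : SPN n D)
    (hS : S.valid) (x : (i : Fin n) → D i) :
    (S.marg M).eval x =
      ∑ y : (i : {i // i ∈ M ∩ S.scope}) → D i,
        S.eval (fun i => if h : i ∈ M ∩ S.scope then y ⟨i, h⟩ else x i) := by
  induction S with
  | leaf i f =>
      by_cases h : i ∈ M
      · have hMi : M ∩ ({i} : Finset (Fin n)) = {i} := by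
          rw [Finset.inter_comm]; exact Finset.singleton_inter_of_mem h
        rw [show (leaf i f).scope = {i} from rfl]
        simp only [marg, if_pos h, eval, scope]
        rw [hMi]
        rw [show (∑ y : (j : {j // j ∈ ({i} : Finset (Fin n))}) → D j.1,
              f (if h : i ∈ ({i} : Finset (Fin n)) then y ⟨i, h⟩ else x i)) =
            ∑ d : D i, f d from
          Fintype.sum_equiv (piSingleton i) _ _ (fun y => by
            rw [dif_pos (Finset.mem_singleton_self i)]; rfl)]
        exact (hS.2).symm
      · have hMi : M ∩ ({i} : Finset (Fin n)) = ∅ := by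
          rw [Finset.inter_comm]; exact Finset.singleton_inter_of_notMem h
        rw [show (leaf i f).scope = {i} from rfl]
        simp only [marg, if_neg h, eval, scope]
        rw [hMi]
        haveI : IsEmpty {j // j ∈ (∅ : Finset (Fin n))} := ⟨fun j => Finset.notMem_empty j.1 j.2⟩
        rw [Fintype.sum_unique]
        rw [dif_neg (Finset.notMem_empty i)]
  | prod l r ihl ihr =>
      obtain ⟨hl, hr, hd⟩ := hS
      have hd' : Disjoint (M ∩ l.scope) (M ∩ r.scope) :=
        hd.mono (Finset.inter_subset_right) (Finset.inter_subset_right)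
      have hsc : M ∩ (l.scope ∪ r.scope) = (M ∩ l.scope) ∪ (M ∩ r.scope) :=
        Finset.inter_union_distrib_left _ _ _
      rw [show (l.prod r).scope = l.scope ∪ r.scope from rfl]
      simp only [marg, eval, scope]
      rw [hsc, ihl hl, ihr hr, ← sum_pi_union _ _ hd']
      refine Finset.sum_congr rfl fun y _ => ?_
      congr 1
      · refine eval_congr l fun i hi => ?_
        by_cases h2 : i ∈ M ∩ l.scope
        · rw [dif_pos (mem_union_left _ h2), dif_pos h2]
        · have h3 : i ∉ M ∩ r.scope := fun h3 =>
            (Finset.disjoint_left.mp hd hi) (Finset.inter_subset_right h3)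
          rw [dif_neg (by simp [h2, h3] :
              ¬ i ∈ (M ∩ l.scope) ∪ (M ∩ r.scope)), dif_neg h2]
      · refine eval_congr r fun i hi => ?_
        by_cases h2 : i ∈ M ∩ r.scope
        · rw [dif_pos (mem_union_right _ h2), dif_pos h2]
        · have h3 : i ∉ M ∩ l.scope := fun h3 =>
            (Finset.disjoint_right.mp hd hi) (Finset.inter_subset_right h3)
          rw [dif_neg (by simp [h2, h3] :
              ¬ i ∈ (M ∩ l.scope) ∪ (M ∩ r.scope)), dif_neg h2]
  | sum w₁ w₂ l r ihl ihr =>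
      obtain ⟨hl, hr, _, _, _, hlr⟩ := hS
      rw [show (sum w₁ w₂ l r).scope = l.scope ∪ r.scope from rfl]
      simp only [marg, eval, scope]
      rw [← hlr, Finset.union_self, ihl hl, ihr hr, ← hlr]
      rw [Finset.mul_sum, Finset.mul_sum, ← Finset.sum_add_distrib]

end SPN

/-- Exact linear-time marginal inference in a complete and
decomposable SPN: for a circuit `S` whose scope is all of `V = E ∪ M`,
replacing every leaf over a marginalized variable (in `M`) by the constant `1`
yields a circuit whose value at any assignment `x` equals the marginal
`∑_{x_M} S(x_E, x_M)` obtained by summing the original circuit over all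
completions of `x` on `M`. -/
theorem spn_marginalization
    (n : ℕ) (D : Fin n → Type) [∀ i, Fintype (D i)]
    (S : SPN n D) (hS : S.valid) (hscope : S.scope = Finset.univ)
    (M : Finset (Fin n)) (x : (i : Fin n) → D i) :
    (S.marg M).eval x =
      ∑ y : (i : {i // i ∈ M}) → D i,
        S.eval (fun i => if h : i ∈ M then y ⟨i, h⟩ else x i) := by
  have h := SPN.marg_eval M S hS x
  rw [hscope, Finset.inter_univ] at h
  exact h
end

section
/- Any conditional query p(y | x) derived from a decomposable, complete, normalized SPN over variables V = Y ∪ X ∪ R is computable as a ratio of two circuit evaluations, each obtainable in linear time via leaf-marginalization, provided the denominator ∑_{y', r} S(x, y', r) is positive. -/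
open Finset

namespace SPNAux

open SPN

variable {n : ℕ} {D : Fin n → Type} [∀ i, Fintype (D i)] [∀ i, DecidableEq (D i)]

theorem eval_congr_s10 (T : SPN n D) {w w' : (i : Fin n) → D i}
    (h : ∀ i ∈ T.scope, w i = w' i) : T.eval w = T.eval w' := by
  induction T with
  | leaf i f => exact congrArg f (h i (by simp [SPN.scope]))
  | prod l r ihl ihr =>
      simp only [SPN.eval]
      rw [ihl fun i hi => h i (by simp [SPN.scope, hi]),
        ihr fun i hi => h i (by simp [SPN.scope, hi])]
  | sum w₁ w₂ l r ihl ihr =>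
      simp only [SPN.eval]
      rw [ihl fun i hi => h i (by simp [SPN.scope, hi]),
        ihr fun i hi => h i (by simp [SPN.scope, hi])]

theorem marg_congr (T : SPN n D) {M M' : Finset (Fin n)}
    (h : ∀ i ∈ T.scope, (i ∈ M ↔ i ∈ M')) : T.marg M = T.marg M' := by
  induction T with
  | leaf i f =>
      simp only [SPN.marg]
      by_cases hi : i ∈ M
      · rw [if_pos hi, if_pos ((h i (by simp [SPN.scope])).1 hi)]
      · rw [if_neg hi, if_neg (fun hi' => hi ((h i (by simp [SPN.scope])).2 hi'))]
  | prod l r ihl ihr =>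
      simp only [SPN.marg]
      rw [ihl fun i hi => h i (by simp [SPN.scope, hi]),
        ihr fun i hi => h i (by simp [SPN.scope, hi])]
  | sum w₁ w₂ l r ihl ihr =>
      simp only [SPN.marg]
      rw [ihl fun i hi => h i (by simp [SPN.scope, hi]),
        ihr fun i hi => h i (by simp [SPN.scope, hi])]

/-- The completions of `v` that may vary only inside `M`. -/
def Aset (v : (i : Fin n) → D i) (M : Finset (Fin n)) : Finset ((i : Fin n) → D i) :=
  univ.filter (fun w => ∀ i ∉ M, w i = v i)

theorem mem_Aset {v : (i : Fin n) → D i} {M : Finset (Fin n)} {w : (i : Fin n) → D i} :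
    w ∈ Aset v M ↔ ∀ i ∉ M, w i = v i := by
  simp [Aset]

theorem sum_split (v : (i : Fin n) → D i) (M s : Finset (Fin n))
    (f g : ((i : Fin n) → D i) → ℝ)
    (hf : ∀ w w' : (i : Fin n) → D i, (∀ i ∈ s, w i = w' i) → f w = f w')
    (hg : ∀ w w' : (i : Fin n) → D i, (∀ i ∉ s, w i = w' i) → g w = g w') :
    ∑ w ∈ Aset v M, f w * g w =
      (∑ w ∈ Aset v (M ∩ s), f w) * (∑ w ∈ Aset v (M \ s), g w) := by
  rw [Finset.sum_mul_sum, ← Finset.sum_product']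
  refine Finset.sum_nbij' (i := fun w => (fun i => if i ∈ s then w i else v i,
      fun i => if i ∈ s then v i else w i))
    (j := fun p => fun i => if i ∈ s then p.1 i else p.2 i) ?_ ?_ ?_ ?_ ?_
  · intro w hw
    rw [mem_Aset] at hw
    rw [Finset.mem_product, mem_Aset, mem_Aset]
    constructor
    · intro i hi
      by_cases his : i ∈ s
      · simp only [if_pos his]
        exact hw i (fun hiM => hi (Finset.mem_inter.mpr ⟨hiM, his⟩))
      · simp [his]
    · intro i hi
      by_cases his : i ∈ s
      · simp [his]
      · simp only [if_neg his]
        exact hw i (fun hiM => hi (Finset.mem_sdiff.mpr ⟨hiM, his⟩))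
  · intro p hp
    rw [Finset.mem_product, mem_Aset, mem_Aset] at hp
    rw [mem_Aset]
    intro i hi
    by_cases his : i ∈ s
    · simp only [if_pos his]
      exact hp.1 i (fun h => hi (Finset.mem_inter.mp h).1)
    · simp only [if_neg his]
      exact hp.2 i (fun h => hi (Finset.mem_sdiff.mp h).1)
  · intro w hw
    funext i
    by_cases his : i ∈ s <;> simp [his]
  · intro p hp
    rw [Finset.mem_product, mem_Aset, mem_Aset] at hp
    refine Prod.ext ?_ ?_ <;> funext i <;> by_cases his : i ∈ s
    · simp [his]
    · simp only [if_neg his]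
      exact (hp.1 i (fun h => his (Finset.mem_inter.mp h).2)).symm
    · simp only [if_pos his]
      exact (hp.2 i (fun h => (Finset.mem_sdiff.mp h).2 his)).symm
    · simp [his]
  · intro w hw
    dsimp only
    exact congrArg₂ (· * ·)
      (hf w _ (fun i hi => (if_pos hi).symm))
      (hg w _ (fun i hi => (if_neg hi).symm))

theorem Aset_empty (v : (i : Fin n) → D i) : Aset v ∅ = {v} := by
  ext w
  rw [mem_Aset, Finset.mem_singleton]
  constructor
  · intro h; funext i; exact h i (by simp)
  · intro h i _; rw [h]

theorem sum_Aset_singleton (v : (i : Fin n) → D i) (j : Fin n) (f : D j → ℝ) :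
    ∑ w ∈ Aset v {j}, f (w j) = ∑ x : D j, f x := by
  refine Finset.sum_nbij' (i := fun w => w j) (j := fun x => Function.update v j x)
    ?_ ?_ ?_ ?_ ?_
  · intro w _; exact Finset.mem_univ _
  · intro x _
    rw [mem_Aset]
    intro i hi
    exact Function.update_of_ne (by simpa using hi) _ _
  · intro w hw
    rw [mem_Aset] at hw
    show Function.update v j (w j) = w
    funext i
    by_cases hij : i = j
    · subst hij; simp
    · rw [Function.update_of_ne hij]
      exact (hw i (by simpa using hij)).symm
  · intro x _; simp
  · intro w _; rfl

theorem sum_one_Aset (v : (i : Fin n) → D i) (M : Finset (Fin n)) :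
    ∑ _w ∈ Aset v M, (1 : ℝ) = ∏ j ∈ M, (Fintype.card (D j) : ℝ) := by
  induction M using Finset.induction_on with
  | empty => simp [Aset_empty]
  | @insert j M hjM ih =>
      have := sum_split v (insert j M) {j} (fun _ => (1 : ℝ)) (fun _ => (1 : ℝ))
        (fun _ _ _ => rfl) (fun _ _ _ => rfl)
      simp only [mul_one] at this
      rw [this]
      have h1 : insert j M ∩ {j} = {j} := by
        ext i; simp (config := {contextual := true}) [Finset.mem_inter]
      have h2 : insert j M \ {j} = M := by
        rw [Finset.insert_sdiff_of_mem _ (Finset.mem_singleton_self j),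
          Finset.sdiff_singleton_eq_erase, Finset.erase_eq_of_notMem hjM]
      rw [h1, h2, ih, Finset.prod_insert hjM]
      congr 1
      have := sum_Aset_singleton v j (fun _ => (1 : ℝ))
      rw [this]
      simp

theorem sum_leaf (v : (i : Fin n) → D i) (M : Finset (Fin n)) (i : Fin n) (f : D i → ℝ) :
    ∑ w ∈ Aset v M, f (w i) =
      (if i ∈ M then ∑ x, f x else f (v i)) * ∏ j ∈ M \ {i}, (Fintype.card (D j) : ℝ) := by
  have := sum_split v M {i} (fun w => f (w i)) (fun _ => (1 : ℝ))
    (fun w w' h => congrArg f (h i (by simp))) (fun _ _ _ => rfl)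
  simp only [mul_one] at this
  rw [this, sum_one_Aset]
  congr 1
  by_cases hiM : i ∈ M
  · rw [if_pos hiM]
    have : M ∩ {i} = {i} := by
      ext j
      simp only [Finset.mem_inter, Finset.mem_singleton, and_iff_right_iff_imp]
      rintro rfl; exact hiM
    rw [this, sum_Aset_singleton]
  · rw [if_neg hiM]
    have : M ∩ {i} = ∅ := by
      ext j; simp only [Finset.mem_inter, Finset.mem_singleton, Finset.notMem_empty, iff_false]
      rintro ⟨hj, rfl⟩; exact hiM hj
    rw [this, Aset_empty, Finset.sum_singleton]

theorem marg_eval (T : SPN n D) (hT : T.valid) (M : Finset (Fin n)) (v : (i : Fin n) → D i) :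
    ∑ w ∈ Aset v M, T.eval w =
      (T.marg M).eval v * ∏ j ∈ M \ T.scope, (Fintype.card (D j) : ℝ) := by
  induction T generalizing M with
  | leaf i f =>
      simp only [SPN.eval]
      rw [sum_leaf v M i f]
      obtain ⟨_, hsum⟩ := hT
      simp only [SPN.marg, SPN.scope]
      by_cases hi : i ∈ M
      · simp [hi, hsum, SPN.eval]
      · simp [hi, SPN.eval]
  | prod l r ihl ihr =>
      obtain ⟨hl, hr, hdisj⟩ := hT
      simp only [SPN.eval]
      rw [sum_split v M l.scope l.eval r.eval
        (fun w w' h => eval_congr_s10 l h)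
        (fun w w' h => eval_congr_s10 r (fun i hi => h i (Finset.disjoint_left.mp hdisj.symm hi)))]
      rw [ihl hl, ihr hr]
      have e1 : l.marg (M ∩ l.scope) = l.marg M :=
        marg_congr l (fun i hi => by simp [Finset.mem_inter, hi])
      have e2 : r.marg (M \ l.scope) = r.marg M :=
        marg_congr r (fun i hi => by
          simp [Finset.mem_sdiff, Finset.disjoint_left.mp hdisj.symm hi])
      have e3 : (M ∩ l.scope) \ l.scope = ∅ :=
        Finset.sdiff_eq_empty_iff_subset.mpr Finset.inter_subset_right
      have e4 : (M \ l.scope) \ r.scope = M \ (prod l r).scope := by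
        ext j; simp [SPN.scope, Finset.mem_sdiff, and_assoc, not_or, and_comm]
      rw [e1, e2, e3, e4]
      show _ = (SPN.prod (l.marg M) (r.marg M)).eval v * _
      simp only [SPN.eval]
      ring
  | sum w₁ w₂ l r ihl ihr =>
      obtain ⟨hl, hr, _, _, _, hsc⟩ := hT
      simp only [SPN.eval, SPN.marg]
      rw [Finset.sum_add_distrib, ← Finset.mul_sum, ← Finset.mul_sum, ihl hl, ihr hr]
      have : M \ (SPN.sum w₁ w₂ l r).scope = M \ l.scope := by
        simp [SPN.scope, hsc]
      rw [this, hsc]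
      ring

end SPNAux

/-- Conditional queries from an SPN as a ratio of two linear-time
circuit evaluations.  For a valid SPN `S` over `V = Ys ∪ Xs ∪ Rs` (a partition)
and a joint assignment `v`, the ratio of the two leaf-marginalized circuit
evaluations `p(y∣x) = (∑_r S(x,y,r)) / (∑_{y',r} S(x,y',r))` — each a single
evaluation of a marginalized circuit — equals the conditional probability of
`Y = v|_Ys` given `X = v|_Xs` under the joint distribution computed by `S`,
provided the denominator is positive. -/
theorem spn_conditional_query
    (n : ℕ) (D : Fin n → Type) [∀ i, Fintype (D i)] [∀ i, DecidableEq (D i)]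
    (S : SPN n D) (hS : S.valid) (hscope : S.scope = Finset.univ)
    (Ys Xs Rs : Finset (Fin n))
    (hYX : Disjoint Ys Xs) (hYR : Disjoint Ys Rs) (hXR : Disjoint Xs Rs)
    (hcover : Ys ∪ Xs ∪ Rs = Finset.univ)
    (v : (i : Fin n) → D i)
    (hpos : 0 < (S.marg (Ys ∪ Rs)).eval v) :
    (S.marg Rs).eval v / (S.marg (Ys ∪ Rs)).eval v =
      (∑ w ∈ univ.filter (fun w : (i : Fin n) → D i => ∀ i ∈ Xs ∪ Ys, w i = v i),
          S.eval w) /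
      (∑ w ∈ univ.filter (fun w : (i : Fin n) → D i => ∀ i ∈ Xs, w i = v i),
          S.eval w) := by
  have hc1 : ∀ i : Fin n, i ∉ Rs ↔ i ∈ Xs ∪ Ys := by
    intro i
    constructor
    · intro h
      have hu : i ∈ Ys ∪ Xs ∪ Rs := hcover ▸ Finset.mem_univ i
      rcases Finset.mem_union.mp hu with h' | h'
      · rcases Finset.mem_union.mp h' with h'' | h''
        · exact Finset.mem_union.mpr (Or.inr h'')
        · exact Finset.mem_union.mpr (Or.inl h'')
      · exact absurd h' h
    · intro h hR
      rcases Finset.mem_union.mp h with h' | h'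
      · exact Finset.disjoint_left.mp hXR h' hR
      · exact Finset.disjoint_left.mp hYR h' hR
  have hc2 : ∀ i : Fin n, i ∉ (Ys ∪ Rs) ↔ i ∈ Xs := by
    intro i
    constructor
    · intro h
      have hu : i ∈ Ys ∪ Xs ∪ Rs := hcover ▸ Finset.mem_univ i
      rcases Finset.mem_union.mp hu with h' | h'
      · rcases Finset.mem_union.mp h' with h'' | h''
        · exact absurd (Finset.mem_union.mpr (Or.inl h'')) h
        · exact h''
      · exact absurd (Finset.mem_union.mpr (Or.inr h')) h
    · intro h hYRs
      rcases Finset.mem_union.mp hYRs with h' | h'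
      · exact Finset.disjoint_left.mp hYX h' h
      · exact Finset.disjoint_left.mp hXR h h'
  have e1 : (univ.filter fun w : (i : Fin n) → D i => ∀ i ∈ Xs ∪ Ys, w i = v i) =
      SPNAux.Aset v Rs := by
    unfold SPNAux.Aset
    refine Finset.filter_congr ?_
    intro w _
    constructor
    · intro h i hi; exact h i ((hc1 i).mp hi)
    · intro h i hi; exact h i ((hc1 i).mpr hi)
  have e2 : (univ.filter fun w : (i : Fin n) → D i => ∀ i ∈ Xs, w i = v i) =
      SPNAux.Aset v (Ys ∪ Rs) := by
    unfold SPNAux.Aset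
    refine Finset.filter_congr ?_
    intro w _
    constructor
    · intro h i hi; exact h i ((hc2 i).mp hi)
    · intro h i hi; exact h i ((hc2 i).mpr hi)
  have m1 := SPNAux.marg_eval S hS Rs v
  have m2 := SPNAux.marg_eval S hS (Ys ∪ Rs) v
  rw [hscope] at m1 m2
  rw [Finset.sdiff_eq_empty_iff_subset.mpr (Finset.subset_univ _),
    Finset.prod_empty, mul_one] at m1
  rw [Finset.sdiff_eq_empty_iff_subset.mpr (Finset.subset_univ _),
    Finset.prod_empty, mul_one] at m2
  rw [e1, e2, m1, m2]
end
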